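/- For every TUX game w on N and player j ∈ N, the average game of the HM-reduced TUX game (with respect to MPW) equals the HM-reduced TU game of the average game (with respect to Sh): v̄_{w_{−j}^{HM,MPW}}(S) = v̄_w(S∪{j}) − Sh_j( v̄_{w_{−(N\(S∪{j}))}} ) = (v̄_w)_{−j}^{HM,Sh}(S) for all S ⊆ N\{j}. -/

import Mathlib

open Finset BigOperators

namespace TUX

/-- A (raw) game in partition function form: assigns a real worth to each
coalition together with a partition (of the outside players). -/
abbrev Game := Finset ℕ → Finset (Finset ℕ) → ℝ

/-- A TU game (characteristic function). -/
abbrev TUGame := Finset ℕ → ℝ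

/-- A solution for TUX games: given a player set and a game, assigns payoffs. -/
abbrev Sol := Finset ℕ → Game → ℕ → ℝ

/-- `w` is a genuine TUX game: the empty coalition has worth 0. -/
def IsTUX (w : Game) : Prop := ∀ π, w ∅ π = 0

/-- `π` is a partition of the finite set `M`. -/
def IsPartition (M : Finset ℕ) (π : Finset (Finset ℕ)) : Prop :=
  (∀ B ∈ π, B ⊆ M) ∧ ∅ ∉ π ∧ ∀ x ∈ M, (π.filter (fun B => x ∈ B)).card = 1

instance (M : Finset ℕ) : DecidablePred (IsPartition M) := fun π => by
  unfold IsPartition; infer_instance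

/-- The finite set of all partitions of `M`. -/
def partitionsOf (M : Finset ℕ) : Finset (Finset (Finset ℕ)) :=
  (M.powerset.powerset).filter (IsPartition M)

/-- The Ewens(θ = 1) probability of the partition `π` of `M`:
`p*_M(π) = ∏_{B ∈ π} (|B| - 1)! / |M|!`. -/
noncomputable def pstar (M : Finset ℕ) (π : Finset (Finset ℕ)) : ℝ :=
  (∏ B ∈ π, ((B.card - 1).factorial : ℝ)) / (M.card.factorial : ℝ)

/-- The block of `π` containing `j` (junk if `π` is not a partition containing `j`). -/
def blockOf (π : Finset (Finset ℕ)) (j : ℕ) : Finset ℕ :=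
  (π.filter (fun B => j ∈ B)).sup id

/-- Add player `i` to the block `B` of `π`. -/
def addToBlock (π : Finset (Finset ℕ)) (i : ℕ) (B : Finset ℕ) : Finset (Finset ℕ) :=
  insert (insert i B) (π.erase B)

/-- The restriction operator `r⋆` removing a single player `i` from a game on `N`:
`w₋ᵢ(S,π) = (1/(n-s)) (w(S, π₊ᵢ⇝∅) + ∑_{j ∈ N∖(S∪{i})} w(S, π₊ᵢ⇝π(j)))`. -/
noncomputable def restrict1 (N : Finset ℕ) (w : Game) (i : ℕ) : Game :=
  fun S π =>
    ((N.card : ℝ) - (S.card : ℝ))⁻¹ *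
      (w S (insert {i} π) + ∑ j ∈ (N \ S).erase i, w S (addToBlock π i (blockOf π j)))

/-- Iterated removal of a list of players. -/
noncomputable def restrictL : Finset ℕ → Game → List ℕ → Game
  | _, w, [] => w
  | N, w, i :: l => restrictL (N.erase i) (restrict1 N w i) l

/-- Removal of a set of players (via the increasing enumeration; by path
independence of `r⋆` the order is immaterial). -/
noncomputable def restrictSet (N : Finset ℕ) (w : Game) (T : Finset ℕ) : Game :=
  restrictL N w (T.sort (· ≤ ·))

/-- The average TU game `v̄_w` of a TUX game `w` on `N`. -/
noncomputable def avg (N : Finset ℕ) (w : Game) : TUGame :=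
  fun S => ∑ π ∈ partitionsOf (N \ S), pstar (N \ S) π * w S π

/-- The auxiliary TU game `v*_w(S) = w₋(N∖S)(S,∅)`. -/
noncomputable def auxGame (N : Finset ℕ) (w : Game) : TUGame :=
  fun S => restrictSet N w (N \ S) S ∅

/-- The Shapley value of a TU game on player set `N`. -/
noncomputable def shapley (N : Finset ℕ) (v : TUGame) (i : ℕ) : ℝ :=
  ∑ S ∈ (N.erase i).powerset,
    (((S.card.factorial : ℝ) * ((N.card - S.card - 1).factorial : ℝ)) / (N.card.factorial : ℝ)) *
      (v (insert i S) - v S)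

/-- The MPW solution: the Shapley value of the average game. -/
noncomputable def MPW (N : Finset ℕ) (w : Game) (i : ℕ) : ℝ := shapley N (avg N w) i

/-- The MPW solution as a solution for TUX games. -/
noncomputable def MPWsol : Sol := fun N w i => MPW N w i

/-- The scaled Dirac TUX game `δ_{T,τ}` on `N`. -/
noncomputable def scaledDirac (N T : Finset ℕ) (τ : Finset (Finset ℕ)) : Game :=
  fun S π => if S = T ∧ π = τ then (pstar (N \ T) τ)⁻¹ else 0

/-- `τ₋S`: remove the players of `S` from each block of `τ`, discarding empty blocks. -/
def partRemove (τ : Finset (Finset ℕ)) (S : Finset ℕ) : Finset (Finset ℕ) :=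
  (τ.image (fun B => B \ S)).erase ∅

/-- The Sobolev-reduced TUX game `w₋ⱼ^{So,φ}` on `N ∖ {j}`. -/
noncomputable def sobRed (N : Finset ℕ) (φ : Sol) (w : Game) (j : ℕ) : Game :=
  fun S π =>
    ((S.card : ℝ) / ((N.card : ℝ) - 1)) * (w (insert j S) π - φ N w j) +
      (1 - (S.card : ℝ) / ((N.card : ℝ) - 1)) * restrict1 N w j S π

/-- The Hart–Mas-Colell reduced TUX game `w₋T^{HM,φ}` on `N ∖ T`. -/
noncomputable def hmRed (N : Finset ℕ) (φ : Sol) (w : Game) (T : Finset ℕ) : Game :=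
  fun S π => w (S ∪ T) π - ∑ j ∈ T, φ (S ∪ T) (restrictSet N w (N \ (S ∪ T))) j

/-- Efficiency for TUX games. -/
def EfficientX (φ : Sol) : Prop :=
  ∀ (N : Finset ℕ) (w : Game), IsTUX w → ∑ i ∈ N, φ N w i = w N ∅

/-- Balanced contributions for TUX games (w.r.t. the restriction operator `r⋆`). -/
def BalancedContributionsX (φ : Sol) : Prop :=
  ∀ (N : Finset ℕ) (w : Game), IsTUX w → ∀ i ∈ N, ∀ j ∈ N,
    φ N w i - φ (N.erase j) (restrict1 N w j) i
      = φ N w j - φ (N.erase i) (restrict1 N w i) j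

/-- 2-standardness for TUX games. -/
def TwoStandardX (φ : Sol) : Prop :=
  ∀ i j : ℕ, i ≠ j → ∀ w : Game, IsTUX w →
    φ {i, j} w i
      = w {i} {({j} : Finset ℕ)}
        + (w {i, j} ∅ - w {j} {({i} : Finset ℕ)} - w {i} {({j} : Finset ℕ)}) / 2

/-- Sobolev consistency for TUX games. -/
def SobolevConsistentX (φ : Sol) : Prop :=
  ∀ (N : Finset ℕ) (w : Game), IsTUX w → ∀ i ∈ N, ∀ j ∈ N, i ≠ j →
    φ N w i = φ (N.erase j) (sobRed N φ w j) i

/-- Hart–Mas-Colell consistency (single-player removal) for TUX games. -/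
def HMConsistentX (φ : Sol) : Prop :=
  ∀ (N : Finset ℕ) (w : Game), IsTUX w → ∀ i ∈ N, ∀ j ∈ N, i ≠ j →
    φ N w i = φ (N.erase j) (hmRed N φ w {j}) i

/-- Set Hart–Mas-Colell consistency (removal of a coalition) for TUX games. -/
def SetHMConsistentX (φ : Sol) : Prop :=
  ∀ (N : Finset ℕ) (w : Game), IsTUX w → ∀ i ∈ N, ∀ T ⊆ N.erase i,
    φ N w i = φ (N \ T) (hmRed N φ w T) i

/-- The finite set of embedded coalitions `(T,τ)` of `N` with `T ≠ ∅`. -/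
def embeddedNE (N : Finset ℕ) : Finset (Finset ℕ × Finset (Finset ℕ)) :=
  (N.powerset ×ˢ N.powerset.powerset).filter
    (fun p => p.1.Nonempty ∧ IsPartition (N \ p.1) p.2)

-- ================== helper lemmas ==================
variable {M G : Finset ℕ} {π σ : Finset (Finset ℕ)} {B C : Finset ℕ} {i x : ℕ}

lemma mem_partitionsOf : π ∈ partitionsOf M ↔ IsPartition M π := by
  constructor
  · intro h; exact (mem_filter.mp h).2
  · intro h
    exact mem_filter.mpr ⟨mem_powerset.mpr fun B hB => mem_powerset.mpr (h.1 B hB), h⟩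

lemma IsPartition.exists_filter_eq (h : IsPartition M π) (hx : x ∈ M) :
    ∃ B, B ∈ π ∧ x ∈ B ∧ π.filter (fun C => x ∈ C) = {B} := by
  obtain ⟨B, hB⟩ := Finset.card_eq_one.mp (h.2.2 x hx)
  have hBmem : B ∈ π.filter (fun C => x ∈ C) := by rw [hB]; exact mem_singleton_self B
  rw [mem_filter] at hBmem
  exact ⟨B, hBmem.1, hBmem.2, hB⟩

lemma IsPartition.block_unique (h : IsPartition M π) (hB : B ∈ π) (hC : C ∈ π)
    (hxB : x ∈ B) (hxC : x ∈ C) : B = C := by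
  have hx : x ∈ M := h.1 B hB hxB
  obtain ⟨D, _, _, hD⟩ := h.exists_filter_eq hx
  have h1 : B ∈ π.filter (fun C => x ∈ C) := mem_filter.mpr ⟨hB, hxB⟩
  have h2 : C ∈ π.filter (fun C => x ∈ C) := mem_filter.mpr ⟨hC, hxC⟩
  rw [hD, mem_singleton] at h1 h2
  rw [h1, h2]

lemma IsPartition.blockOf_mem (h : IsPartition M π) (hx : x ∈ M) :
    blockOf π x ∈ π ∧ x ∈ blockOf π x := by
  obtain ⟨B, hB, hxB, hfil⟩ := h.exists_filter_eq hx
  have : blockOf π x = B := by rw [blockOf, hfil, Finset.sup_singleton]; rfl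
  rw [this]; exact ⟨hB, hxB⟩

lemma IsPartition.blockOf_eq (h : IsPartition M π) (hC : C ∈ π) (hxC : x ∈ C) :
    blockOf π x = C := by
  have hx : x ∈ M := h.1 C hC hxC
  obtain ⟨hm, hmem⟩ := h.blockOf_mem hx
  exact h.block_unique hm hC hmem hxC

lemma IsPartition.biUnion_eq (h : IsPartition M π) : π.biUnion id = M := by
  ext x
  simp only [mem_biUnion, id]
  constructor
  · rintro ⟨B, hB, hxB⟩; exact h.1 B hB hxB
  · intro hx; exact ⟨_, (h.blockOf_mem hx).1, (h.blockOf_mem hx).2⟩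

lemma IsPartition.sum_blockOf (h : IsPartition M π) (f : Finset ℕ → ℝ) :
    ∑ x ∈ M, f (blockOf π x) = ∑ B ∈ π, (B.card : ℝ) * f B := by
  rw [← h.biUnion_eq, Finset.sum_biUnion]
  · refine Finset.sum_congr rfl fun B hB => ?_
    rw [Finset.sum_congr rfl (fun x hx => by rw [h.blockOf_eq hB hx])]
    simp [mul_comm]
  · intro a ha b hb hab
    rw [Function.onFun, Finset.disjoint_left]
    intro x hxa hxb
    exact hab (h.block_unique (by simpa using ha) (by simpa using hb) hxa hxb)

lemma IsPartition.card_sum (h : IsPartition M π) : ∑ B ∈ π, B.card = M.card := by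
  have := Finset.card_biUnion (s := π) (t := id) (fun a ha b hb hab => ?_)
  · rw [h.biUnion_eq] at this; rw [this]; rfl
  · rw [Function.onFun, Finset.disjoint_left]
    intro x hxa hxb
    exact hab (h.block_unique ha hb hxa hxb)

-- block of a partition of G (with i ∉ G) never contains i
lemma IsPartition.not_mem_block (h : IsPartition G π) (hi : i ∉ G) (hB : B ∈ π) : i ∉ B :=
  fun hmem => hi (h.1 B hB hmem)

lemma isPartition_insert_singleton (hi : i ∉ G) (h : IsPartition G π) :
    IsPartition (insert i G) (insert {i} π) := by
  have hsing : ({i} : Finset ℕ) ∉ π := fun hs => (h.not_mem_block hi hs) (mem_singleton_self i)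
  refine ⟨?_, ?_, ?_⟩
  · intro B hB
    rcases mem_insert.mp hB with rfl | hB
    · exact singleton_subset_iff.mpr (mem_insert_self i G)
    · exact (h.1 B hB).trans (subset_insert i G)
  · intro hemp
    rcases mem_insert.mp hemp with hh | hh
    · exact absurd hh.symm (by simp)
    · exact h.2.1 hh
  · intro x hx
    rw [Finset.filter_insert]
    rcases mem_insert.mp hx with rfl | hxG
    · rw [if_pos (mem_singleton_self x)]
      have : π.filter (fun B => x ∈ B) = ∅ :=
        Finset.filter_eq_empty_iff.mpr fun {B} hB => h.not_mem_block hi hB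
      rw [this]
      simp
    · have hxi : x ≠ i := fun hh => hi (hh ▸ hxG)
      rw [if_neg (by simp [hxi])]
      exact h.2.2 x hxG

lemma isPartition_addToBlock (hi : i ∉ G) (h : IsPartition G π) (hB : B ∈ π) :
    IsPartition (insert i G) (addToBlock π i B) := by
  have hiB : i ∉ B := h.not_mem_block hi hB
  have hnew : insert i B ∉ π.erase B := fun hmem =>
    (h.not_mem_block hi (mem_of_mem_erase hmem)) (mem_insert_self i B)
  refine ⟨?_, ?_, ?_⟩
  · intro C hC
    rcases mem_insert.mp hC with rfl | hC
    · exact insert_subset_insert i (h.1 B hB)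
    · exact (h.1 C (mem_of_mem_erase hC)).trans (subset_insert i G)
  · intro hemp
    rcases mem_insert.mp hemp with hh | hh
    · exact absurd hh.symm (by simp)
    · exact h.2.1 (mem_of_mem_erase hh)
  · intro x hx
    rw [addToBlock, Finset.filter_insert]
    rcases mem_insert.mp hx with rfl | hxG
    · rw [if_pos (mem_insert_self x B)]
      have : (π.erase B).filter (fun C => x ∈ C) = ∅ :=
        Finset.filter_eq_empty_iff.mpr fun {C} hC => h.not_mem_block hi (mem_of_mem_erase hC)
      rw [this]; simp
    · have hxi : x ≠ i := fun hh => hi (hh ▸ hxG)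
      by_cases hxB : x ∈ B
      · rw [if_pos (mem_insert_of_mem hxB)]
        have : (π.erase B).filter (fun C => x ∈ C) = ∅ := by
          refine Finset.filter_eq_empty_iff.mpr fun {C} hC hxC => ?_
          exact (Finset.ne_of_mem_erase hC) (h.block_unique (mem_of_mem_erase hC) hB hxC hxB)
        rw [this]; simp
      · rw [if_neg (by simp [hxi, hxB])]
        rw [Finset.filter_erase]
        rw [Finset.erase_eq_of_notMem (by simp [hxB])]
        exact h.2.2 x hxG

lemma singleton_not_mem (hi : i ∉ G) (h : IsPartition G π) : ({i} : Finset ℕ) ∉ π :=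
  fun hs => (h.not_mem_block hi hs) (mem_singleton_self i)

lemma blockOf_insert_singleton (hi : i ∉ G) (h : IsPartition G π) :
    blockOf (insert {i} π) i = {i} := by
  rw [blockOf, Finset.filter_insert, if_pos (mem_singleton_self i)]
  have : π.filter (fun B => i ∈ B) = ∅ :=
    Finset.filter_eq_empty_iff.mpr fun {B} hB => h.not_mem_block hi hB
  rw [this]
  simp

lemma blockOf_addToBlock (hi : i ∉ G) (h : IsPartition G π) (hB : B ∈ π) :
    blockOf (addToBlock π i B) i = insert i B := by
  rw [addToBlock, blockOf, Finset.filter_insert, if_pos (mem_insert_self i B)]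
  have : (π.erase B).filter (fun C => i ∈ C) = ∅ :=
    Finset.filter_eq_empty_iff.mpr fun {C} hC => h.not_mem_block hi (mem_of_mem_erase hC)
  rw [this]
  simp

lemma classify (hi : i ∉ G) (h : IsPartition (insert i G) σ) :
    (∃ π, IsPartition G π ∧ σ = insert {i} π) ∨
      (∃ π B, IsPartition G π ∧ B ∈ π ∧ σ = addToBlock π i B) := by
  have hiM : i ∈ insert i G := mem_insert_self i G
  obtain ⟨hB0mem, hiB0⟩ := h.blockOf_mem hiM
  set B0 := blockOf σ i with hB0def
  have hionly : ∀ C ∈ σ, i ∈ C → C = B0 := fun C hC hiC =>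
    h.block_unique hC hB0mem hiC hiB0
  by_cases hB0 : B0 = {i}
  · left
    refine ⟨σ.erase {i}, ?_, (Finset.insert_erase (hB0 ▸ hB0mem)).symm⟩
    refine ⟨?_, fun hc => h.2.1 (mem_of_mem_erase hc), ?_⟩
    · intro C hC y hy
      have hCσ := mem_of_mem_erase hC
      have hiC : i ∉ C := fun hiC => (Finset.ne_of_mem_erase hC) ((hionly C hCσ hiC).trans hB0)
      have := h.1 C hCσ hy
      rcases mem_insert.mp this with rfl | hyG
      · exact absurd hy hiC
      · exact hyG
    · intro x hx
      have hxi : x ≠ i := fun hh => hi (hh ▸ hx)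
      rw [Finset.filter_erase, Finset.erase_eq_of_notMem]
      · exact h.2.2 x (mem_insert_of_mem hx)
      · simp [hxi]
  · right
    set B := B0.erase i with hBdef
    have hB0eq : insert i B = B0 := Finset.insert_erase hiB0
    have hBne : B ≠ ∅ := by
      intro hB
      apply hB0
      ext y
      simp only [mem_singleton]
      constructor
      · intro hy
        by_contra hne
        have : y ∈ B := Finset.mem_erase.mpr ⟨hne, hy⟩
        simp [hB] at this
      · rintro rfl; exact hiB0
    have hiB : i ∉ B := Finset.notMem_erase i B0
    have hBσ : B ∉ σ := by
      intro hBσ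
      obtain ⟨y, hy⟩ := Finset.nonempty_iff_ne_empty.mpr hBne
      have := h.block_unique hBσ hB0mem hy (Finset.mem_of_mem_erase hy)
      rw [this] at hiB
      exact hiB hiB0
    refine ⟨insert B (σ.erase B0), B, ?_, mem_insert_self B _, ?_⟩
    · -- IsPartition G (insert B (σ.erase B0))
      have hblocksub : ∀ C ∈ σ.erase B0, C ⊆ G := by
        intro C hC y hy
        have hCσ := mem_of_mem_erase hC
        have hiC : i ∉ C := fun hiC => (Finset.ne_of_mem_erase hC) (hionly C hCσ hiC)
        rcases mem_insert.mp (h.1 C hCσ hy) with rfl | hyG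
        · exact absurd hy hiC
        · exact hyG
      refine ⟨?_, ?_, ?_⟩
      · intro C hC
        rcases mem_insert.mp hC with rfl | hC
        · intro y hy
          have hyB0 : y ∈ B0 := mem_of_mem_erase hy
          have hyi : y ≠ i := Finset.ne_of_mem_erase hy
          rcases mem_insert.mp (h.1 B0 hB0mem hyB0) with rfl | hyG
          · exact absurd rfl hyi
          · exact hyG
        · exact hblocksub C hC
      · intro hemp
        rcases mem_insert.mp hemp with hh | hh
        · exact hBne hh.symm
        · exact h.2.1 (mem_of_mem_erase hh)
      · intro x hx
        have hxi : x ≠ i := fun hh => hi (hh ▸ hx)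
        rw [Finset.filter_insert]
        by_cases hxB0 : x ∈ B0
        · have hxB : x ∈ B := Finset.mem_erase.mpr ⟨hxi, hxB0⟩
          rw [if_pos hxB]
          have : (σ.erase B0).filter (fun C => x ∈ C) = ∅ := by
            refine Finset.filter_eq_empty_iff.mpr fun {C} hC hxC => ?_
            exact (Finset.ne_of_mem_erase hC)
              (h.block_unique (mem_of_mem_erase hC) hB0mem hxC hxB0)
          rw [this]; simp
        · have hxB : x ∉ B := fun hxB => hxB0 (Finset.mem_of_mem_erase hxB)
          rw [if_neg hxB, Finset.filter_erase, Finset.erase_eq_of_notMem (by simp [hxB0])]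
          exact h.2.2 x (mem_insert_of_mem hx)
    · -- σ = addToBlock (insert B (σ.erase B0)) i B
      rw [addToBlock, Finset.erase_insert (by simp [hBσ] : B ∉ σ.erase B0), hB0eq,
        Finset.insert_erase hB0mem]

lemma sum_partitions_insert (hi : i ∉ G) (f : Finset (Finset ℕ) → ℝ) :
    ∑ σ ∈ partitionsOf (insert i G), f σ
      = ∑ π ∈ partitionsOf G, (f (insert {i} π) + ∑ B ∈ π, f (addToBlock π i B)) := by
  have step : ∀ π ∈ partitionsOf G,
      f (insert {i} π) + ∑ B ∈ π, f (addToBlock π i B)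
        = ∑ B ∈ insert ∅ π, f (if B = ∅ then insert {i} π else addToBlock π i B) := by
    intro π hπ
    rw [Finset.sum_insert (mem_partitionsOf.mp hπ).2.1, if_pos rfl]
    congr 1
    exact Finset.sum_congr rfl fun B hB => by
      rw [if_neg (fun h => (mem_partitionsOf.mp hπ).2.1 (by rw [← h]; exact hB))]
  rw [Finset.sum_congr rfl step, Finset.sum_sigma']
  symm
  refine Finset.sum_bij
    (fun p _ => if p.2 = ∅ then insert {i} p.1 else addToBlock p.1 i p.2) ?_ ?_ ?_ ?_
  · rintro ⟨π, B⟩ hp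
    rw [Finset.mem_sigma] at hp
    have hπ := mem_partitionsOf.mp hp.1
    dsimp only
    by_cases hB : B = ∅
    · rw [if_pos hB]; exact mem_partitionsOf.mpr (isPartition_insert_singleton hi hπ)
    · rw [if_neg hB]
      rcases mem_insert.mp hp.2 with rfl | hBπ
      · exact absurd rfl hB
      · exact mem_partitionsOf.mpr (isPartition_addToBlock hi hπ hBπ)
  · rintro ⟨π, B⟩ hp ⟨π', B'⟩ hp' heq
    rw [Finset.mem_sigma] at hp hp'
    have hπ : IsPartition G π := mem_partitionsOf.mp hp.1
    have hπ' : IsPartition G π' := mem_partitionsOf.mp hp'.1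
    have hBmem : B = ∅ ∨ B ∈ π := by
      rcases mem_insert.mp hp.2 with h | h
      exacts [Or.inl h, Or.inr h]
    have hBmem' : B' = ∅ ∨ B' ∈ π' := by
      rcases mem_insert.mp hp'.2 with h | h
      exacts [Or.inl h, Or.inr h]
    dsimp only at heq
    have hne : ∀ {ρ ρ' C'}, IsPartition G ρ → IsPartition G ρ' → C' ∈ ρ' →
        insert {i} ρ ≠ addToBlock ρ' i C' := by
      intro ρ ρ' C' hρ hρ' hC' hcontr
      have hb := congrArg (fun τ => blockOf τ i) hcontr
      rw [blockOf_insert_singleton hi hρ, blockOf_addToBlock hi hρ' hC'] at hb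
      have hC'emp : C' = ∅ := by
        ext y
        simp only [Finset.notMem_empty, iff_false]
        intro hy
        have : y ∈ insert i C' := mem_insert_of_mem hy
        rw [← hb, mem_singleton] at this
        exact (hρ'.not_mem_block hi hC') (this ▸ hy)
      exact hρ'.2.1 (hC'emp ▸ hC')
    by_cases hB : B = ∅ <;> by_cases hB' : B' = ∅
    · subst hB; subst hB'
      rw [if_pos rfl, if_pos rfl] at heq
      have : π = π' := by
        have h1 : (insert ({i} : Finset ℕ) π).erase {i} = π :=
          Finset.erase_insert (singleton_not_mem hi hπ)
        have h2 : (insert ({i} : Finset ℕ) π').erase {i} = π' :=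
          Finset.erase_insert (singleton_not_mem hi hπ')
        rw [← h1, ← h2, heq]
      subst this; rfl
    · rcases hBmem' with h | hB'π'
      · exact absurd h hB'
      rw [if_pos hB, if_neg hB'] at heq
      exact absurd heq (hne hπ hπ' hB'π')
    · rcases hBmem with h | hBπ
      · exact absurd h hB
      rw [if_neg hB, if_pos hB'] at heq
      exact absurd heq.symm (hne hπ' hπ hBπ)
    · rcases hBmem with h | hBπ
      · exact absurd h hB
      rcases hBmem' with h | hB'π'
      · exact absurd h hB'
      rw [if_neg hB, if_neg hB'] at heq
      have hBeq : B = B' := by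
        have hb := congrArg (fun τ => blockOf τ i) heq
        rw [blockOf_addToBlock hi hπ hBπ, blockOf_addToBlock hi hπ' hB'π'] at hb
        have h1 : (insert i B).erase i = B := Finset.erase_insert (hπ.not_mem_block hi hBπ)
        have h2 : (insert i B').erase i = B' := Finset.erase_insert (hπ'.not_mem_block hi hB'π')
        rw [← h1, ← h2, hb]
      subst hBeq
      have hπeq : π = π' := by
        have hX : insert i B ∉ π.erase B := fun hmem =>
          (hπ.not_mem_block hi (mem_of_mem_erase hmem)) (mem_insert_self i B)
        have hX' : insert i B ∉ π'.erase B := fun hmem =>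
          (hπ'.not_mem_block hi (mem_of_mem_erase hmem)) (mem_insert_self i B)
        have h1 : (insert (insert i B) (π.erase B)).erase (insert i B) = π.erase B :=
          Finset.erase_insert hX
        have h2 : (insert (insert i B) (π'.erase B)).erase (insert i B) = π'.erase B :=
          Finset.erase_insert hX'
        rw [addToBlock, addToBlock] at heq
        have : π.erase B = π'.erase B := by rw [← h1, ← h2, heq]
        rw [← Finset.insert_erase hBπ, ← Finset.insert_erase hB'π', this]
      subst hπeq; rfl
  · intro σ hσ
    have hσP := mem_partitionsOf.mp hσ
    rcases classify hi hσP with ⟨π, hπ, rfl⟩ | ⟨π, B, hπ, hB, rfl⟩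
    · exact ⟨⟨π, ∅⟩, Finset.mem_sigma.mpr ⟨mem_partitionsOf.mpr hπ, mem_insert_self _ _⟩, by simp⟩
    · refine ⟨⟨π, B⟩, Finset.mem_sigma.mpr ⟨mem_partitionsOf.mpr hπ, mem_insert_of_mem hB⟩, ?_⟩
      dsimp only
      rw [if_neg (fun h => hπ.2.1 (by rw [← h]; exact hB))]
  · intro p hp; rfl

lemma pstar_insert_singleton (hi : i ∉ G) (h : IsPartition G π) :
    pstar (insert i G) (insert {i} π) = pstar G π / (G.card + 1) := by
  rw [pstar, pstar, Finset.prod_insert (singleton_not_mem hi h),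
    Finset.card_insert_of_notMem hi]
  have h1 : ((G.card + 1).factorial : ℝ) = (G.card + 1) * (G.card.factorial : ℝ) := by
    rw [Nat.factorial_succ]; push_cast; ring
  have h0 : ((({i} : Finset ℕ).card - 1).factorial : ℝ) = 1 := by simp
  rw [h1, h0, one_mul]
  rw [div_div, mul_comm ((G.card : ℝ) + 1) (G.card.factorial : ℝ)]

lemma pstar_addToBlock (hi : i ∉ G) (h : IsPartition G π) (hB : B ∈ π) :
    pstar (insert i G) (addToBlock π i B) = B.card * pstar G π / (G.card + 1) := by
  have hiB : i ∉ B := h.not_mem_block hi hB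
  have hnew : insert i B ∉ π.erase B := fun hmem =>
    (h.not_mem_block hi (mem_of_mem_erase hmem)) (mem_insert_self i B)
  have hBpos : 0 < B.card :=
    Finset.card_pos.mpr (Finset.nonempty_iff_ne_empty.mpr (fun hc => h.2.1 (hc ▸ hB)))
  rw [pstar, pstar, addToBlock, Finset.prod_insert hnew,
    Finset.card_insert_of_notMem hiB, Finset.card_insert_of_notMem hi]
  have hprod : ∏ C ∈ π, ((C.card - 1).factorial : ℝ)
      = ((B.card - 1).factorial : ℝ) * ∏ C ∈ π.erase B, ((C.card - 1).factorial : ℝ) :=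
    (Finset.mul_prod_erase π _ hB).symm
  have hfac : ((B.card + 1 - 1).factorial : ℝ) = B.card * ((B.card - 1).factorial : ℝ) := by
    obtain ⟨k, hk⟩ := Nat.exists_eq_add_of_lt hBpos
    simp only [hk]
    rw [Nat.add_sub_cancel, Nat.add_sub_cancel]
    have : 0 + k + 1 = k + 1 := by ring
    rw [this, Nat.factorial_succ]
    push_cast; ring
  have h1 : ((G.card + 1).factorial : ℝ) = (G.card + 1) * (G.card.factorial : ℝ) := by
    rw [Nat.factorial_succ]; push_cast; ring
  rw [hfac, hprod, h1]
  have h2 : (G.card.factorial : ℝ) ≠ 0 := Nat.cast_ne_zero.mpr (Nat.factorial_ne_zero _)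
  have h3 : ((G.card : ℝ) + 1) ≠ 0 := by positivity
  field_simp

lemma partitionsOf_empty : partitionsOf (∅ : Finset ℕ) = {∅} := by
  ext σ
  simp only [partitionsOf, mem_filter, mem_powerset, Finset.powerset_empty, mem_singleton]
  constructor
  · rintro ⟨hsub, hpart⟩
    rcases Finset.subset_singleton_iff.mp hsub with h | h
    · exact h
    · exact absurd (h ▸ hpart.2.1) (by simp)
  · rintro rfl
    exact ⟨Finset.empty_subset _, fun B hB => absurd hB (Finset.notMem_empty B),
      Finset.notMem_empty _, fun x hx => absurd hx (Finset.notMem_empty x)⟩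

lemma sum_pstar (M : Finset ℕ) : ∑ π ∈ partitionsOf M, pstar M π = 1 := by
  induction M using Finset.induction_on with
  | empty => simp [partitionsOf_empty, pstar]
  | @insert a s ha ih =>
    rw [sum_partitions_insert ha]
    have : ∀ π ∈ partitionsOf s,
        pstar (insert a s) (insert {a} π) + ∑ B ∈ π, pstar (insert a s) (addToBlock π a B)
          = pstar s π := by
      intro π hπ
      have hπP := mem_partitionsOf.mp hπ
      rw [pstar_insert_singleton ha hπP,
        Finset.sum_congr rfl (fun B hB => pstar_addToBlock ha hπP hB)]
      have hsum : ∑ B ∈ π, (B.card : ℝ) * pstar s π / (s.card + 1)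
          = (s.card : ℝ) * pstar s π / (s.card + 1) := by
        rw [← Finset.sum_div, ← Finset.sum_mul, ← Nat.cast_sum, hπP.card_sum]
      rw [hsum]
      have h3 : ((s.card : ℝ) + 1) ≠ 0 := by positivity
      field_simp
      ring
    rw [Finset.sum_congr rfl this, ih]

lemma avg_restrict1 {M U : Finset ℕ} {i : ℕ} (w : Game) (hiM : i ∈ M) (hU : U ⊆ M.erase i) :
    avg (M.erase i) (restrict1 M w i) U = avg M w U := by
  have hiU : i ∉ U := fun h => (Finset.notMem_erase i M) (hU h)
  have hground : (M.erase i) \ U = (M \ U).erase i := by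
    ext x; simp only [mem_sdiff, mem_erase]; tauto
  rw [avg, avg, hground]
  set G := (M \ U).erase i with hG
  have hiG : i ∉ G := Finset.notMem_erase i _
  have hins : M \ U = insert i G := (Finset.insert_erase (Finset.mem_sdiff.mpr ⟨hiM, hiU⟩)).symm
  have hUM : U ⊆ M := hU.trans (Finset.erase_subset i M)
  have hcard : M.card = G.card + 1 + U.card := by
    have h1 : (M \ U).card = M.card - U.card := Finset.card_sdiff_of_subset hUM
    have h2 : (M \ U).card = G.card + 1 := by rw [hins, Finset.card_insert_of_notMem hiG]
    have h3 := Finset.card_le_card hUM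
    omega
  have hcast : (M.card : ℝ) - (U.card : ℝ) = (G.card : ℝ) + 1 := by
    rw [hcard]; push_cast; ring
  rw [hins, sum_partitions_insert hiG (fun σ => pstar (insert i G) σ * w U σ)]
  refine Finset.sum_congr rfl fun π hπ => ?_
  have hπP : IsPartition G π := mem_partitionsOf.mp hπ
  show pstar G π * restrict1 M w i U π = _
  rw [restrict1]
  rw [hcast, ← hG]
  rw [hπP.sum_blockOf (fun B => w U (addToBlock π i B))]
  rw [pstar_insert_singleton hiG hπP]
  rw [show (∑ B ∈ π, pstar (insert i G) (addToBlock π i B) * w U (addToBlock π i B))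
      = ∑ B ∈ π, ((B.card : ℝ) * pstar G π / ((G.card : ℝ) + 1)) * w U (addToBlock π i B) from
    Finset.sum_congr rfl fun B hB => by rw [pstar_addToBlock hiG hπP hB]]
  rw [← mul_assoc, mul_add, Finset.mul_sum]
  exact congrArg₂ (· + ·) (by ring) (Finset.sum_congr rfl fun B _ => by ring)

lemma avg_restrictL (l : List ℕ) : ∀ (M : Finset ℕ) (w : Game), l.Nodup →
    (∀ x ∈ l, x ∈ M) → ∀ U ⊆ M \ l.toFinset,
      avg (M \ l.toFinset) (restrictL M w l) U = avg M w U := by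
  induction l with
  | nil => intro M w _ _ U _; simp [restrictL]
  | cons i l ih =>
    intro M w hnd hmem U hU
    have hiM : i ∈ M := hmem i List.mem_cons_self
    have hil : i ∉ l := (List.nodup_cons.mp hnd).1
    have htf : M \ (i :: l).toFinset = (M.erase i) \ l.toFinset := by
      ext x
      simp only [List.toFinset_cons, mem_sdiff, mem_insert, mem_erase]
      tauto
    rw [show restrictL M w (i :: l) = restrictL (M.erase i) (restrict1 M w i) l from rfl]
    rw [htf] at hU ⊢
    rw [ih (M.erase i) (restrict1 M w i) (List.nodup_cons.mp hnd).2
      (fun x hx => Finset.mem_erase.mpr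
        ⟨fun hxi => hil (hxi ▸ hx), hmem x (List.mem_cons_of_mem i hx)⟩) U hU]
    exact avg_restrict1 w hiM (hU.trans Finset.sdiff_subset)

lemma avg_restrictSet {M T U : Finset ℕ} (w : Game) (hT : T ⊆ M) (hU : U ⊆ M \ T) :
    avg (M \ T) (restrictSet M w T) U = avg M w U := by
  have h1 : (T.sort (· ≤ ·)).toFinset = T := Finset.sort_toFinset _ _
  have h2 := avg_restrictL (T.sort (· ≤ ·)) M w (Finset.sort_nodup _ _)
    (fun x hx => hT ((Finset.mem_sort _).mp hx)) U (by rw [h1]; exact hU)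
  rw [h1] at h2
  exact h2

end TUX
open TUX in
/-- The average game of the HM-reduced TUX game (w.r.t. MPW) equals
the HM-reduced TU game of the average game (w.r.t. the Shapley value). -/
theorem avg_hmRed (N : Finset ℕ) (w : Game) (hw : IsTUX w) (j : ℕ) (hj : j ∈ N) :
    ∀ S ⊆ N.erase j,
      avg (N.erase j) (hmRed N MPWsol w {j}) S
          = avg N w (insert j S)
            - shapley (insert j S) (avg (insert j S) (restrictSet N w (N \ insert j S))) j ∧
        avg (N.erase j) (hmRed N MPWsol w {j}) S
          = avg N w (insert j S) - shapley (insert j S) (avg N w) j := by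
  intro S hS
  have hTN : insert j S ⊆ N := Finset.insert_subset hj (hS.trans (Finset.erase_subset j N))
  have hST : S ∪ {j} = insert j S := by ext x; simp [or_comm]
  have hground : (N.erase j) \ S = N \ insert j S := by
    ext x; simp only [mem_sdiff, mem_erase, mem_insert]; tauto
  have hcomm : ∀ U ⊆ insert j S,
      avg (insert j S) (restrictSet N w (N \ insert j S)) U = avg N w U := by
    intro U hU
    have h1 : N \ (N \ insert j S) = insert j S := by
      rw [sdiff_sdiff_right_self, Finset.inf_eq_inter]
      exact Finset.inter_eq_right.mpr hTN
    have h2 := avg_restrictSet (M := N) (T := N \ insert j S) (U := U) w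
      Finset.sdiff_subset (by rw [h1]; exact hU)
    rw [h1] at h2
    exact h2
  have hmain : avg (N.erase j) (hmRed N MPWsol w {j}) S
      = avg N w (insert j S)
        - shapley (insert j S) (avg (insert j S) (restrictSet N w (N \ insert j S))) j := by
    rw [avg, hground, avg]
    have hterm : ∀ π ∈ partitionsOf (N \ insert j S),
        pstar (N \ insert j S) π * hmRed N MPWsol w {j} S π
          = pstar (N \ insert j S) π * w (insert j S) π
            - pstar (N \ insert j S) π *
                shapley (insert j S)
                  (avg (insert j S) (restrictSet N w (N \ insert j S))) j := by
      intro π hπ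
      simp only [hmRed, hST, Finset.sum_singleton, MPWsol, MPW]
      ring
    rw [Finset.sum_congr rfl hterm, Finset.sum_sub_distrib, ← Finset.sum_mul, sum_pstar, one_mul]
  refine ⟨hmain, ?_⟩
  rw [hmain]
  congr 1
  rw [shapley, shapley]
  refine Finset.sum_congr rfl fun S' hS' => ?_
  have hS'sub : S' ⊆ (insert j S).erase j := Finset.mem_powerset.mp hS'
  have h1 := hcomm (insert j S')
    (Finset.insert_subset (Finset.mem_insert_self j S)
      ((hS'sub.trans (Finset.erase_subset j _))))
  have h2 := hcomm S' (hS'sub.trans (Finset.erase_subset j _))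
  rw [h1, h2]
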